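/- There exists a nowhere dense class 𝒞 of finite graphs that does not have the strong Erdős–Hajnal property; that is, for every δ > 0 there is a graph G in 𝒞 with n ≥ 2 vertices such that G contains no two disjoint vertex subsets A, B, each of size at least δn, with A complete or anticomplete to B. -/

import Mathlib

open SimpleGraph

/-- A class of finite graphs, represented as a set of graphs on `Fin n` for each `n`. -/
abbrev GraphClass : Type := ∀ n : ℕ, Set (SimpleGraph (Fin n))

/-- The complete graph on `t` vertices is a depth-`r` minor of `G`: there are `t`
pairwise disjoint nonempty branch sets, each inducing a connected subgraph of radius
at most `r`, that are pairwise joined by an edge of `G`. -/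
def CompleteDepthMinor {V : Type} (G : SimpleGraph V) (r t : ℕ) : Prop :=
  ∃ B : Fin t → Set V,
    (∀ i, (B i).Nonempty) ∧
    (∀ i j, i ≠ j → Disjoint (B i) (B j)) ∧
    (∀ i, ∃ v : B i, ∀ u : B i, ∃ p : (G.induce (B i)).Walk v u, p.length ≤ r) ∧
    (∀ i j, i ≠ j → ∃ u ∈ B i, ∃ w ∈ B j, G.Adj u w)

/-- A class of finite graphs is nowhere dense if for every radius `r` there is a `t`
such that the complete graph on `t` vertices is not a depth-`r` minor of any graph
in the class. -/
def NowhereDense (𝒞 : GraphClass) : Prop :=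
  ∀ r : ℕ, ∃ t : ℕ, ∀ n : ℕ, ∀ G ∈ 𝒞 n, ¬ CompleteDepthMinor G r t

section Aux
open Finset Function

section Counting

lemma card_filter_mem_le {α β : Type*} [Fintype α] [DecidableEq α] [Fintype β] [DecidableEq β]
    (S : Finset α) (t : Finset β) :
    (univ.filter (fun f : α → β => ∀ a ∈ S, f a ∈ t)).card
      = t.card ^ S.card * (Fintype.card β) ^ (Fintype.card α - S.card) := by
  have h : (univ.filter (fun f : α → β => ∀ a ∈ S, f a ∈ t))
      = Fintype.piFinset (fun a => if a ∈ S then t else univ) := by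
    ext f
    simp only [mem_filter, mem_univ, true_and, Fintype.mem_piFinset]
    constructor
    · intro h a
      by_cases ha : a ∈ S <;> simp [ha, h a]
    · intro h a ha
      have := h a
      simpa [ha] using this
  rw [h, Fintype.card_piFinset]
  have : ∀ a : α, (if a ∈ S then t else univ).card = if a ∈ S then t.card else Fintype.card β := by
    intro a; by_cases ha : a ∈ S <;> simp [ha]
  simp only [this]
  rw [← Finset.prod_mul_prod_compl S]
  have h1 : ∏ a ∈ S, (if a ∈ S then t.card else Fintype.card β) = t.card ^ S.card := by
    rw [Finset.prod_congr rfl (fun a ha => if_pos ha), Finset.prod_const]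
  have h2 : ∏ a ∈ Sᶜ, (if a ∈ S then t.card else Fintype.card β)
      = (Fintype.card β) ^ (Fintype.card α - S.card) := by
    rw [Finset.prod_congr rfl (fun a ha => if_neg (by simpa using ha)), Finset.prod_const,
      Finset.card_compl]
  rw [h1, h2]

lemma choose_le_two_pow (n k : ℕ) : n.choose k ≤ 2 ^ n := by
  rcases le_or_gt k n with h | h
  · calc n.choose k ≤ ∑ m ∈ range (n+1), n.choose m :=
        Finset.single_le_sum (f := fun m => n.choose m) (fun _ _ => Nat.zero_le _)
          (by simp [Nat.lt_succ_iff, h])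
    _ = 2 ^ n := Nat.sum_range_choose n
  · simp [Nat.choose_eq_zero_of_lt h]

lemma R1_arith (N n k : ℕ) (hN : 2 ≤ N) (hk : (N-1) * (2*n+4) ≤ k^2) :
    4 * (n.choose k)^2 * (N-1)^(k^2) ≤ N^(k^2) := by
  have hM1 : 1 ≤ N - 1 := by omega
  set M : ℕ := N - 1 with hMdef
  have hNM : N = M + 1 := by omega
  have hMR : (1:ℝ) ≤ (M:ℝ) := by exact_mod_cast hM1
  have hM0 : (M:ℝ) ≠ 0 := by positivity
  have hbase : (1:ℝ) ≤ 1 + 1/(M:ℝ) := le_add_of_nonneg_right (by positivity)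
  have key : (2:ℝ)^(2*n+4) ≤ (1 + 1/(M:ℝ))^(k^2) := by
    have b1 : (2:ℝ) ≤ (1 + 1/(M:ℝ))^M := by
      have h := one_add_mul_le_pow (a := 1/(M:ℝ))
        (le_trans (by norm_num : (-2:ℝ) ≤ 0) (by positivity)) M
      have hm : (1:ℝ) + (M:ℝ) * (1/(M:ℝ)) = 2 := by field_simp; norm_num
      linarith [h, hm.ge]
    have b2 : ((1:ℝ) + 1/(M:ℝ))^(M*(2*n+4)) ≤ (1 + 1/(M:ℝ))^(k^2) :=
      pow_le_pow_right₀ hbase hk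
    calc (2:ℝ)^(2*n+4) ≤ ((1 + 1/(M:ℝ))^M)^(2*n+4) :=
          pow_le_pow_left₀ (by norm_num) b1 _
      _ = (1 + 1/(M:ℝ))^(M*(2*n+4)) := by rw [← pow_mul]
      _ ≤ _ := b2
  have hch : (n.choose k : ℝ) ≤ 2^n := by exact_mod_cast choose_le_two_pow n k
  have main : (4:ℝ) * (n.choose k)^2 * (M:ℝ)^(k^2) ≤ (N:ℝ)^(k^2) := by
    have h1 : (4:ℝ) * (n.choose k)^2 ≤ 2^(2*n+4) := by
      have h2 : ((n.choose k:ℝ))^2 ≤ (2^n)^2 := pow_le_pow_left₀ (by positivity) hch _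
      calc (4:ℝ) * (n.choose k)^2 ≤ 4 * (2^n)^2 := by linarith
        _ = 2^(2*n+2) := by rw [← pow_mul]; ring
        _ ≤ 2^(2*n+4) := by apply pow_le_pow_right₀ (by norm_num); omega
    have hMp : (0:ℝ) ≤ (M:ℝ)^(k^2) := by positivity
    calc (4:ℝ) * (n.choose k)^2 * (M:ℝ)^(k^2)
        ≤ 2^(2*n+4) * (M:ℝ)^(k^2) := mul_le_mul_of_nonneg_right h1 hMp
      _ ≤ (1 + 1/(M:ℝ))^(k^2) * (M:ℝ)^(k^2) := mul_le_mul_of_nonneg_right key hMp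
      _ = ((1 + 1/(M:ℝ)) * M)^(k^2) := by rw [mul_pow]
      _ = (N:ℝ)^(k^2) := by
          congr 1
          rw [hNM]
          field_simp
          norm_cast
  exact_mod_cast main

lemma geo_sum_le (c m : ℕ) (hc : 2 ≤ c) : ∑ i ∈ range m, c^i ≤ c^m := by
  induction m with
  | zero => simp
  | succ m ih =>
    rw [Finset.sum_range_succ, pow_succ]
    have h2 : c^m * 2 ≤ c^m * c := Nat.mul_le_mul_left _ hc
    omega

end Counting

section FinRotate

lemma finRotate_val_succ {l : ℕ} (i : Fin l) (hi : i.val + 1 < l) :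
    (finRotate l i).val = i.val + 1 := by
  rcases l with _|m
  · omega
  · rw [finRotate_succ_apply]
    exact Fin.val_add_one_of_lt (by rw [Fin.lt_iff_val_lt_val]; simp [Fin.last]; omega)

lemma finRotate_val_last {l : ℕ} (i : Fin l) (hi : i.val + 1 = l) :
    (finRotate l i).val = 0 := by
  rcases l with _|m
  · omega
  · have : i = Fin.last m := by ext; simp [Fin.last]; omega
    rw [this, finRotate_last]
    rfl

end FinRotate

section Gf

/-- The graph determined by an edge-labelling `f`: an edge is present iff its label is `0`. -/
def Gf {n N : ℕ} [NeZero N] (f : Sym2 (Fin n) → Fin N) : SimpleGraph (Fin n) where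
  Adj a b := a ≠ b ∧ f s(a, b) = 0
  symm := by constructor; rintro a b ⟨h1, h2⟩; exact ⟨h1.symm, by rwa [Sym2.eq_swap]⟩
  loopless := by constructor; rintro a ⟨h, _⟩; exact h rfl

/-- Injectivity of consecutive-pair slots of an injective cyclic tuple. -/
lemma slot_inj {n l : ℕ} (h3 : 3 ≤ l) (c : Fin l → Fin n) (hc : Injective c) :
    Injective (fun i : Fin l => s(c i, c (finRotate l i))) := by
  intro i j h
  simp only [Sym2.eq_iff] at h
  rcases h with ⟨h1, _⟩ | ⟨h1, h2⟩
  · exact hc h1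
  · -- c i = c (rot j) and c (rot i) = c j
    have e1 : i = finRotate l j := hc h1
    have e2 : finRotate l i = j := hc h2
    -- then j.val + 2 ≡ j.val mod l, impossible since 3 ≤ l
    exfalso
    have hl0 : 0 < l := by omega
    have hv : ∀ m : Fin l, (finRotate l m).val = (m.val + 1) % l := by
      intro m
      rcases Nat.lt_or_ge (m.val + 1) l with h | h
      · rw [finRotate_val_succ m h, Nat.mod_eq_of_lt h]
      · have : m.val + 1 = l := by omega
        rw [finRotate_val_last m this, this, Nat.mod_self]
    have hij : i.val = (j.val + 1) % l := by rw [e1, hv]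
    have hji : j.val = (i.val + 1) % l := by rw [← e2, hv]
    have hi := i.isLt
    have hj := j.isLt
    rcases Nat.lt_or_ge (j.val + 1) l with h | h
    · rw [Nat.mod_eq_of_lt h] at hij
      rcases Nat.lt_or_ge (i.val + 1) l with h' | h'
      · rw [Nat.mod_eq_of_lt h'] at hji; omega
      · have : i.val + 1 = l := by omega
        rw [this, Nat.mod_self] at hji; omega
    · have hjl : j.val + 1 = l := by omega
      rw [hjl, Nat.mod_self] at hij
      rw [hij] at hji
      have h1l : (0 + 1) % l = 1 := Nat.mod_eq_of_lt (by omega)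
      rw [h1l] at hji
      omega

end Gf


lemma step1 (n N k L z : ℕ) (hN : 2 ≤ N) (hz : 1 ≤ z) (hLn : L ≤ n) (hk1 : 1 ≤ k)
    (hkP : 2 * k^2 ≤ n * n)
    (hR1 : 4 * (n.choose k)^2 * (N-1)^(k^2) ≤ N^(k^2))
    (hR2 : 4 * (n.choose k)^2 ≤ N^(k^2))
    (hR3 : ∀ ℓ, 3 ≤ ℓ → ℓ ≤ L → 4*(L+1)*n^ℓ ≤ z * N^ℓ) :
    ∃ G : SimpleGraph (Fin n), ∃ Z : Finset (Fin n), Z.card ≤ L * z ∧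
      (∀ A B : Finset (Fin n), Disjoint A B → A.card = k → B.card = k →
        (∃ a ∈ A, ∃ b ∈ B, G.Adj a b) ∧ (∃ a ∈ A, ∃ b ∈ B, ¬ G.Adj a b)) ∧
      (∀ ℓ, 3 ≤ ℓ → ℓ ≤ L → ∀ c : Fin ℓ → Fin n, Injective c →
        (∀ i, G.Adj (c i) (c (finRotate ℓ i))) → ∃ i, c i ∈ Z) := by
  classical
  haveI : NeZero N := ⟨by omega⟩
  set P : ℕ := Fintype.card (Sym2 (Fin n)) with hPdef
  have hcardΩ : (univ : Finset (Sym2 (Fin n) → Fin N)).card = N ^ P := by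
    rw [Finset.card_univ, Fintype.card_fun, Fintype.card_fin]
  have hchoose2 : (n+1).choose 2 = (n+1)*n/2 := by rw [Nat.choose_two_right]; simp
  have hPval : P = (n+1)*n/2 := by rw [hPdef, Sym2.card, Fintype.card_fin, hchoose2]
  have hPn : n ≤ P := by
    rw [hPval, Nat.le_div_iff_mul_le (by norm_num)]; nlinarith
  have hkPle : k^2 ≤ P := by
    rw [hPval, Nat.le_div_iff_mul_le (by norm_num)]; nlinarith
  -- pair events
  have pairEvent : ∀ t : Finset (Fin N),
      (univ.filter (fun f : Sym2 (Fin n) → Fin N => ∃ A B : Finset (Fin n),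
        Disjoint A B ∧ A.card = k ∧ B.card = k ∧ ∀ a ∈ A, ∀ b ∈ B, f s(a,b) ∈ t)).card
      ≤ (n.choose k)^2 * (t.card^(k^2) * N^(P - k^2)) := by
    intro t
    set idx : Finset (Finset (Fin n) × Finset (Fin n)) :=
      ((univ : Finset (Fin n)).powersetCard k ×ˢ (univ : Finset (Fin n)).powersetCard k).filter
        (fun AB => Disjoint AB.1 AB.2) with hidx
    have hsub : (univ.filter (fun f : Sym2 (Fin n) → Fin N => ∃ A B : Finset (Fin n),
        Disjoint A B ∧ A.card = k ∧ B.card = k ∧ ∀ a ∈ A, ∀ b ∈ B, f s(a,b) ∈ t))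
        ⊆ idx.biUnion (fun AB => univ.filter (fun f =>
            ∀ p ∈ (AB.1 ×ˢ AB.2).image (fun ab => s(ab.1, ab.2)), f p ∈ t)) := by
      intro f hf
      rw [mem_filter] at hf
      obtain ⟨-, A, B, hAB, hA, hB, hall⟩ := hf
      rw [Finset.mem_biUnion]
      refine ⟨(A, B), ?_, ?_⟩
      · rw [hidx, mem_filter, Finset.mem_product]
        exact ⟨⟨by simp [Finset.mem_powersetCard, hA], by simp [Finset.mem_powersetCard, hB]⟩, hAB⟩
      · rw [mem_filter]
        refine ⟨mem_univ _, ?_⟩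
        intro p hp
        simp only [Finset.mem_image, Finset.mem_product] at hp
        obtain ⟨⟨a, b⟩, ⟨ha, hb⟩, rfl⟩ := hp
        exact hall a ha b hb
    have hterm : ∀ AB ∈ idx,
        (univ.filter (fun f : Sym2 (Fin n) → Fin N =>
          ∀ p ∈ (AB.1 ×ˢ AB.2).image (fun ab => s(ab.1, ab.2)), f p ∈ t)).card
        = t.card^(k^2) * N^(P - k^2) := by
      intro AB hAB
      rw [hidx, mem_filter, Finset.mem_product, Finset.mem_powersetCard,
        Finset.mem_powersetCard] at hAB
      obtain ⟨⟨⟨-, hA⟩, ⟨-, hB⟩⟩, hD⟩ := hAB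
      have hslot : ((AB.1 ×ˢ AB.2).image (fun ab => s(ab.1, ab.2))).card = k^2 := by
        rw [Finset.card_image_of_injOn, Finset.card_product, hA, hB, sq]
        rintro ⟨a, b⟩ hab ⟨a', b'⟩ hab' h
        simp only [Finset.mem_coe, Finset.mem_product] at hab hab'
        simp only [Sym2.eq_iff] at h
        have hd := Finset.disjoint_left.mp hD
        rcases h with ⟨h1, h2⟩ | ⟨h1, h2⟩
        · rw [Prod.ext_iff]; exact ⟨h1, h2⟩
        · exfalso; exact hd hab.1 (h1 ▸ hab'.2)
      rw [card_filter_mem_le, hslot, Fintype.card_fin]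
    calc _ ≤ _ := Finset.card_le_card hsub
      _ ≤ ∑ AB ∈ idx, (univ.filter (fun f : Sym2 (Fin n) → Fin N =>
          ∀ p ∈ (AB.1 ×ˢ AB.2).image (fun ab => s(ab.1, ab.2)), f p ∈ t)).card :=
        Finset.card_biUnion_le
      _ = ∑ _AB ∈ idx, t.card^(k^2) * N^(P - k^2) := Finset.sum_congr rfl hterm
      _ = idx.card * (t.card^(k^2) * N^(P - k^2)) := by rw [Finset.sum_const, smul_eq_mul]
      _ ≤ (n.choose k)^2 * (t.card^(k^2) * N^(P - k^2)) := by
          apply Nat.mul_le_mul_right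
          calc idx.card ≤ ((univ : Finset (Fin n)).powersetCard k ×ˢ
              (univ : Finset (Fin n)).powersetCard k).card := Finset.card_filter_le _ _
            _ = (n.choose k)^2 := by
                rw [Finset.card_product, Finset.card_powersetCard, Finset.card_univ,
                  Fintype.card_fin, sq]
  -- events
  set E1 : Finset (Sym2 (Fin n) → Fin N) := univ.filter (fun f =>
    ∃ A B : Finset (Fin n), Disjoint A B ∧ A.card = k ∧ B.card = k ∧
      ∀ a ∈ A, ∀ b ∈ B, f s(a,b) ∈ (({0} : Finset (Fin N))ᶜ)) with hE1def
  set E2 : Finset (Sym2 (Fin n) → Fin N) := univ.filter (fun f =>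
    ∃ A B : Finset (Fin n), Disjoint A B ∧ A.card = k ∧ B.card = k ∧
      ∀ a ∈ A, ∀ b ∈ B, f s(a,b) ∈ ({0} : Finset (Fin N))) with hE2def
  set Y : (Sym2 (Fin n) → Fin N) → ℕ := fun f =>
    ∑ ℓ ∈ Icc 3 L, (univ.filter (fun c : Fin ℓ → Fin n =>
      Injective c ∧ ∀ i, (Gf f).Adj (c i) (c (finRotate ℓ i)))).card with hYdef
  set E3 : Finset (Sym2 (Fin n) → Fin N) := univ.filter (fun f => z ≤ Y f) with hE3def
  have hb1 : 4 * E1.card ≤ N ^ P := by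
    have h := pairEvent (({0} : Finset (Fin N))ᶜ)
    have hcc : ((({0} : Finset (Fin N))ᶜ)).card = N - 1 := by
      rw [Finset.card_compl, Finset.card_singleton, Fintype.card_fin]
    rw [hcc] at h
    calc 4 * E1.card ≤ 4 * ((n.choose k)^2 * ((N-1)^(k^2) * N^(P - k^2))) :=
          Nat.mul_le_mul_left _ h
      _ = (4 * (n.choose k)^2 * (N-1)^(k^2)) * N^(P - k^2) := by ring
      _ ≤ N^(k^2) * N^(P-k^2) := Nat.mul_le_mul hR1 le_rfl
      _ = N ^ P := by rw [← pow_add, Nat.add_sub_cancel' hkPle]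
  have hb2 : 4 * E2.card ≤ N ^ P := by
    have h := pairEvent ({0} : Finset (Fin N))
    rw [Finset.card_singleton, one_pow, one_mul] at h
    calc 4 * E2.card ≤ 4 * ((n.choose k)^2 * N^(P - k^2)) := Nat.mul_le_mul_left _ h
      _ = (4 * (n.choose k)^2) * N^(P - k^2) := by ring
      _ ≤ N^(k^2) * N^(P-k^2) := Nat.mul_le_mul hR2 le_rfl
      _ = N ^ P := by rw [← pow_add, Nat.add_sub_cancel' hkPle]
  -- expectation of Y
  have hEY : 4 * (L+1) * (∑ f : Sym2 (Fin n) → Fin N, Y f) ≤ (L+1) * (z * N ^ P) := by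
    have hswap : (∑ f : Sym2 (Fin n) → Fin N, Y f)
        = ∑ ℓ ∈ Icc 3 L, ∑ c : Fin ℓ → Fin n,
            (univ.filter (fun f : Sym2 (Fin n) → Fin N =>
              Injective c ∧ ∀ i, (Gf f).Adj (c i) (c (finRotate ℓ i)))).card := by
      rw [hYdef]
      rw [Finset.sum_comm]
      apply Finset.sum_congr rfl
      intro ℓ _
      have h1 : ∀ f : Sym2 (Fin n) → Fin N,
          (univ.filter (fun c : Fin ℓ → Fin n =>
            Injective c ∧ ∀ i, (Gf f).Adj (c i) (c (finRotate ℓ i)))).card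
          = ∑ c : Fin ℓ → Fin n, if Injective c ∧ ∀ i, (Gf f).Adj (c i) (c (finRotate ℓ i))
              then 1 else 0 := by
        intro f; rw [Finset.card_filter]
      have h2 : ∀ c : Fin ℓ → Fin n,
          (univ.filter (fun f : Sym2 (Fin n) → Fin N =>
            Injective c ∧ ∀ i, (Gf f).Adj (c i) (c (finRotate ℓ i)))).card
          = ∑ f : Sym2 (Fin n) → Fin N, if Injective c ∧ ∀ i, (Gf f).Adj (c i) (c (finRotate ℓ i))
              then 1 else 0 := by
        intro c; rw [Finset.card_filter]
      simp only [h1, h2]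
      rw [Finset.sum_comm]
    rw [hswap]
    have hterm : ∀ ℓ ∈ Icc 3 L, ∑ c : Fin ℓ → Fin n,
        (univ.filter (fun f : Sym2 (Fin n) → Fin N =>
          Injective c ∧ ∀ i, (Gf f).Adj (c i) (c (finRotate ℓ i)))).card
        ≤ n^ℓ * N^(P - ℓ) := by
      intro ℓ hℓ
      rw [Finset.mem_Icc] at hℓ
      have hone : ∀ c : Fin ℓ → Fin n,
          (univ.filter (fun f : Sym2 (Fin n) → Fin N =>
            Injective c ∧ ∀ i, (Gf f).Adj (c i) (c (finRotate ℓ i)))).card ≤ N^(P - ℓ) := by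
        intro c
        by_cases hc : Injective c
        · have hsub2 : (univ.filter (fun f : Sym2 (Fin n) → Fin N =>
              Injective c ∧ ∀ i, (Gf f).Adj (c i) (c (finRotate ℓ i))))
              ⊆ univ.filter (fun f : Sym2 (Fin n) → Fin N =>
                ∀ p ∈ (univ : Finset (Fin ℓ)).image
                  (fun i => s(c i, c (finRotate ℓ i))), f p ∈ ({0} : Finset (Fin N))) := by
            intro f hf
            rw [mem_filter] at hf ⊢
            refine ⟨mem_univ _, ?_⟩
            intro p hp
            simp only [Finset.mem_image, Finset.mem_univ, true_and] at hp
            obtain ⟨i, rfl⟩ := hp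
            have := hf.2.2 i
            simp only [Gf] at this
            simpa using this.2
          have hcard2 : ((univ : Finset (Fin ℓ)).image
              (fun i => s(c i, c (finRotate ℓ i)))).card = ℓ := by
            rw [Finset.card_image_of_injective _ (slot_inj hℓ.1 c hc), Finset.card_univ,
              Fintype.card_fin]
          calc _ ≤ _ := Finset.card_le_card hsub2
            _ = _ := card_filter_mem_le _ _
            _ ≤ N^(P-ℓ) := by
                rw [hcard2, Finset.card_singleton, one_pow, one_mul, Fintype.card_fin]
        · have : (univ.filter (fun f : Sym2 (Fin n) → Fin N =>
              Injective c ∧ ∀ i, (Gf f).Adj (c i) (c (finRotate ℓ i)))) = ∅ := by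
            ext f; simp [hc]
          rw [this]; simp
      calc ∑ c : Fin ℓ → Fin n, _ ≤ ∑ _c : Fin ℓ → Fin n, N^(P-ℓ) :=
            Finset.sum_le_sum (fun c _ => hone c)
        _ = n^ℓ * N^(P - ℓ) := by
            rw [Finset.sum_const, smul_eq_mul, Finset.card_univ, Fintype.card_fun,
              Fintype.card_fin, Fintype.card_fin]
    calc 4 * (L+1) * (∑ ℓ ∈ Icc 3 L, ∑ c : Fin ℓ → Fin n,
          (univ.filter (fun f : Sym2 (Fin n) → Fin N =>
            Injective c ∧ ∀ i, (Gf f).Adj (c i) (c (finRotate ℓ i)))).card)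
        ≤ 4 * (L+1) * (∑ ℓ ∈ Icc 3 L, n^ℓ * N^(P - ℓ)) :=
          Nat.mul_le_mul_left _ (Finset.sum_le_sum hterm)
      _ = ∑ ℓ ∈ Icc 3 L, (4 * (L+1) * n^ℓ) * N^(P - ℓ) := by
          rw [Finset.mul_sum]; apply Finset.sum_congr rfl; intro ℓ _; ring
      _ ≤ ∑ ℓ ∈ Icc 3 L, (z * N^ℓ) * N^(P - ℓ) := by
          apply Finset.sum_le_sum
          intro ℓ hℓ
          rw [Finset.mem_Icc] at hℓ
          exact Nat.mul_le_mul (hR3 ℓ hℓ.1 hℓ.2) le_rfl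
      _ = ∑ ℓ ∈ Icc 3 L, z * N ^ P := by
          apply Finset.sum_congr rfl
          intro ℓ hℓ
          rw [Finset.mem_Icc] at hℓ
          rw [mul_assoc, ← pow_add, Nat.add_sub_cancel' (le_trans hℓ.2 (le_trans hLn hPn))]
      _ = (Icc 3 L).card * (z * N ^ P) := by rw [Finset.sum_const, smul_eq_mul]
      _ ≤ (L+1) * (z * N ^ P) := by
          have hic : (Icc 3 L).card ≤ L + 1 := by rw [Nat.card_Icc]; exact Nat.sub_le _ _
          exact Nat.mul_le_mul hic le_rfl
  have hEY2 : 4 * (∑ f : Sym2 (Fin n) → Fin N, Y f) ≤ z * N ^ P := by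
    have hL1 : 0 < L + 1 := by omega
    have h5 : (4 * (∑ f : Sym2 (Fin n) → Fin N, Y f)) * (L+1) ≤ (z * N ^ P) * (L+1) := by
      calc (4 * (∑ f : Sym2 (Fin n) → Fin N, Y f)) * (L+1)
          = 4 * (L+1) * (∑ f : Sym2 (Fin n) → Fin N, Y f) := by ring
        _ ≤ (L+1) * (z * N ^ P) := hEY
        _ = (z * N ^ P) * (L+1) := by ring
    exact Nat.le_of_mul_le_mul_right h5 hL1
  have hb3 : 4 * E3.card ≤ N ^ P := by
    have hmarkov : E3.card * z ≤ ∑ f : Sym2 (Fin n) → Fin N, Y f := by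
      calc E3.card * z = E3.card • z := by rw [smul_eq_mul]
        _ ≤ ∑ f ∈ E3, Y f := Finset.card_nsmul_le_sum _ _ _
            (fun f hf => by rw [hE3def, mem_filter] at hf; exact hf.2)
        _ ≤ ∑ f : Sym2 (Fin n) → Fin N, Y f :=
            Finset.sum_le_sum_of_subset (Finset.subset_univ _)
    have h4 : 4 * (E3.card * z) ≤ z * N ^ P := le_trans (Nat.mul_le_mul_left _ hmarkov) hEY2
    have hz0 : 0 < z := hz
    have h5 : (4 * E3.card) * z ≤ (N ^ P) * z := by
      calc (4 * E3.card) * z = 4 * (E3.card * z) := by ring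
        _ ≤ z * N ^ P := h4
        _ = (N ^ P) * z := by ring
    exact Nat.le_of_mul_le_mul_right h5 hz0
  -- find a good labelling
  have hgood : ∃ f : Sym2 (Fin n) → Fin N, f ∉ E1 ∧ f ∉ E2 ∧ f ∉ E3 := by
    by_contra hcon
    push_neg at hcon
    have hcover : (univ : Finset (Sym2 (Fin n) → Fin N)) ⊆ E1 ∪ E2 ∪ E3 := by
      intro f _
      rcases Classical.em (f ∈ E1) with h | h
      · exact Finset.mem_union_left _ (Finset.mem_union_left _ h)
      rcases Classical.em (f ∈ E2) with h' | h'
      · exact Finset.mem_union_left _ (Finset.mem_union_right _ h')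
      · exact Finset.mem_union_right _ (hcon f h h')
    have hcard : N ^ P ≤ E1.card + E2.card + E3.card := by
      calc N ^ P = (univ : Finset (Sym2 (Fin n) → Fin N)).card := hcardΩ.symm
        _ ≤ (E1 ∪ E2 ∪ E3).card := Finset.card_le_card hcover
        _ ≤ (E1 ∪ E2).card + E3.card := Finset.card_union_le _ _
        _ ≤ E1.card + E2.card + E3.card := by
            have := Finset.card_union_le E1 E2; omega
    have hNP : 0 < N ^ P := pow_pos (by omega) P
    omega
  obtain ⟨f, hf1, hf2, hf3⟩ := hgood
  set Z : Finset (Fin n) := (Icc 3 L).biUnion (fun ℓ =>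
    ((univ : Finset (Fin ℓ → Fin n)).filter (fun c =>
      Injective c ∧ ∀ i, (Gf f).Adj (c i) (c (finRotate ℓ i)))).biUnion
        (fun c => (univ : Finset (Fin ℓ)).image c)) with hZdef
  have hYlt : Y f < z := by
    rw [hE3def, mem_filter] at hf3
    push_neg at hf3
    exact hf3 (mem_univ f)
  have hZcard : Z.card ≤ L * z := by
    calc Z.card ≤ ∑ ℓ ∈ Icc 3 L,
        (((univ : Finset (Fin ℓ → Fin n)).filter (fun c =>
          Injective c ∧ ∀ i, (Gf f).Adj (c i) (c (finRotate ℓ i)))).biUnion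
            (fun c => (univ : Finset (Fin ℓ)).image c)).card := Finset.card_biUnion_le
      _ ≤ ∑ ℓ ∈ Icc 3 L, ((univ : Finset (Fin ℓ → Fin n)).filter (fun c =>
          Injective c ∧ ∀ i, (Gf f).Adj (c i) (c (finRotate ℓ i)))).card * L := by
          apply Finset.sum_le_sum
          intro ℓ hℓ
          rw [Finset.mem_Icc] at hℓ
          calc _ ≤ ∑ c ∈ (univ : Finset (Fin ℓ → Fin n)).filter (fun c =>
              Injective c ∧ ∀ i, (Gf f).Adj (c i) (c (finRotate ℓ i))),
                ((univ : Finset (Fin ℓ)).image c).card := Finset.card_biUnion_le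
            _ ≤ ∑ _c ∈ (univ : Finset (Fin ℓ → Fin n)).filter (fun c =>
              Injective c ∧ ∀ i, (Gf f).Adj (c i) (c (finRotate ℓ i))), L := by
                apply Finset.sum_le_sum
                intro c _
                calc ((univ : Finset (Fin ℓ)).image c).card
                    ≤ (univ : Finset (Fin ℓ)).card := Finset.card_image_le
                  _ = ℓ := by rw [Finset.card_univ, Fintype.card_fin]
                  _ ≤ L := hℓ.2
            _ = _ := by rw [Finset.sum_const, smul_eq_mul]
      _ = (∑ ℓ ∈ Icc 3 L, ((univ : Finset (Fin ℓ → Fin n)).filter (fun c =>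
          Injective c ∧ ∀ i, (Gf f).Adj (c i) (c (finRotate ℓ i)))).card) * L := by
          rw [← Finset.sum_mul]
      _ = Y f * L := by rw [hYdef]
      _ ≤ z * L := Nat.mul_le_mul (le_of_lt hYlt) le_rfl
      _ = L * z := Nat.mul_comm _ _
  refine ⟨Gf f, Z, hZcard, ?_, ?_⟩
  · -- pure pair property
    intro A B hAB hA hB
    simp only [hE1def, mem_filter, mem_univ, true_and] at hf1
    simp only [hE2def, mem_filter, mem_univ, true_and] at hf2
    push_neg at hf1 hf2
    constructor
    · obtain ⟨a, ha, b, hb, hab⟩ := hf1 A B hAB hA hB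
      refine ⟨a, ha, b, hb, ?_⟩
      have hne : a ≠ b := fun h => Finset.disjoint_left.mp hAB ha (h ▸ hb)
      have h0 : f s(a, b) = 0 := by
        simp only [Finset.mem_compl, Finset.mem_singleton] at hab
        tauto
      exact ⟨hne, h0⟩
    · obtain ⟨a, ha, b, hb, hab⟩ := hf2 A B hAB hA hB
      refine ⟨a, ha, b, hb, ?_⟩
      rintro ⟨-, h0⟩
      simp only [Finset.mem_singleton] at hab
      exact hab h0
  · -- short cycle tuples meet Z
    intro ℓ h3 hL c hc hadj
    have hl0 : 0 < ℓ := by omega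
    refine ⟨⟨0, hl0⟩, ?_⟩
    rw [hZdef, Finset.mem_biUnion]
    refine ⟨ℓ, Finset.mem_Icc.mpr ⟨h3, hL⟩, ?_⟩
    rw [Finset.mem_biUnion]
    refine ⟨c, ?_, ?_⟩
    · rw [mem_filter]; exact ⟨mem_univ _, hc, hadj⟩
    · exact Finset.mem_image.mpr ⟨⟨0, hl0⟩, mem_univ _, rfl⟩


lemma getVert_inj_of_isPath {V : Type} {G : SimpleGraph V} {u v : V} (p : G.Walk u v)
    (hp : p.IsPath) : ∀ i j : ℕ, i ≤ p.length → j ≤ p.length →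
      p.getVert i = p.getVert j → i = j := by
  induction p with
  | nil => intro i j hi hj _; simp [SimpleGraph.Walk.length_nil] at hi hj; omega
  | cons h q ih =>
    rw [SimpleGraph.Walk.cons_isPath_iff] at hp
    intro i j hi hj hij
    rw [SimpleGraph.Walk.length_cons] at hi hj
    match i, j with
    | 0, 0 => rfl
    | 0, (j+1) =>
      exfalso
      rw [SimpleGraph.Walk.getVert_zero, SimpleGraph.Walk.getVert_cons_succ] at hij
      exact hp.2 (SimpleGraph.Walk.mem_support_iff_exists_getVert.mpr ⟨j, hij.symm, by omega⟩)
    | (i+1), 0 =>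
      exfalso
      rw [SimpleGraph.Walk.getVert_zero, SimpleGraph.Walk.getVert_cons_succ] at hij
      exact hp.2 (SimpleGraph.Walk.mem_support_iff_exists_getVert.mpr ⟨i, hij, by omega⟩)
    | (i+1), (j+1) =>
      rw [SimpleGraph.Walk.getVert_cons_succ, SimpleGraph.Walk.getVert_cons_succ] at hij
      have := ih hp.1 i j (by omega) (by omega) hij
      omega

lemma two_le_length {V : Type} {G : SimpleGraph V} {u v : V} (p : G.Walk u v)
    (hne : u ≠ v) (he : s(v, u) ∉ p.edges) : 2 ≤ p.length := by
  cases p with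
  | nil => exact absurd rfl hne
  | cons h q =>
    cases q with
    | nil =>
      exfalso
      apply he
      rw [SimpleGraph.Walk.edges_cons]
      simp [Sym2.eq_swap]
    | cons h' q' =>
      rw [SimpleGraph.Walk.length_cons, SimpleGraph.Walk.length_cons]
      omega

lemma branch_edge_mem {V : Type} {G : SimpleGraph V} {s : Set V} {x y : ↥s}
    (q : (G.induce s).Walk x y) {e : Sym2 V}
    (he : e ∈ (q.map (SimpleGraph.Embedding.induce s).toHom).edges) :
    ∀ w ∈ e, w ∈ s := by
  rw [SimpleGraph.Walk.edges_map] at he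
  rw [List.mem_map] at he
  obtain ⟨e', _, rfl⟩ := he
  intro w hw
  rw [Sym2.mem_map] at hw
  obtain ⟨a, _, rfl⟩ := hw
  exact a.2

lemma no_K3_of_cycfree {V : Type} [DecidableEq V] (G : SimpleGraph V) (L r : ℕ) (hLr : 6*r+3 ≤ L)
    (hcyc : ∀ ℓ : ℕ, 3 ≤ ℓ → ℓ ≤ L → ∀ c : Fin ℓ → V, Injective c →
      ¬ (∀ i, G.Adj (c i) (c (finRotate ℓ i)))) :
    ¬ CompleteDepthMinor G r 3 := by
  rintro ⟨B, hne, hdisj, hrad, hadj⟩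
  obtain ⟨a1, ha1, b2, hb2, h12⟩ := hadj 0 1 (by decide)
  obtain ⟨a2, ha2, b3, hb3, h23⟩ := hadj 1 2 (by decide)
  obtain ⟨a3, ha3, b1, hb1, h31⟩ := hadj 2 0 (by decide)
  obtain ⟨v0, hw0⟩ := hrad 0
  obtain ⟨v1, hw1⟩ := hrad 1
  obtain ⟨v2, hw2⟩ := hrad 2
  obtain ⟨q0b, hq0b⟩ := hw0 ⟨b1, hb1⟩
  obtain ⟨q0a, hq0a⟩ := hw0 ⟨a1, ha1⟩
  obtain ⟨q1b, hq1b⟩ := hw1 ⟨b2, hb2⟩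
  obtain ⟨q1a, hq1a⟩ := hw1 ⟨a2, ha2⟩
  obtain ⟨q2b, hq2b⟩ := hw2 ⟨b3, hb3⟩
  obtain ⟨q2a, hq2a⟩ := hw2 ⟨a3, ha3⟩
  -- walks within branch sets, mapped into G
  set W0 : G.Walk b1 a1 :=
    ((q0b.reverse.append q0a).map (SimpleGraph.Embedding.induce (B 0)).toHom) with hW0
  set W1 : G.Walk b2 a2 :=
    ((q1b.reverse.append q1a).map (SimpleGraph.Embedding.induce (B 1)).toHom) with hW1
  set W2 : G.Walk b3 a3 :=
    ((q2b.reverse.append q2a).map (SimpleGraph.Embedding.induce (B 2)).toHom) with hW2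
  have hW0len : W0.length ≤ 2*r := by
    have h := SimpleGraph.Walk.length_map (SimpleGraph.Embedding.induce (B 0)).toHom (q0b.reverse.append q0a)
    rw [SimpleGraph.Walk.length_append, SimpleGraph.Walk.length_reverse] at h
    have h' : W0.length = q0b.length + q0a.length := h
    omega
  have hW1len : W1.length ≤ 2*r := by
    have h := SimpleGraph.Walk.length_map (SimpleGraph.Embedding.induce (B 1)).toHom (q1b.reverse.append q1a)
    rw [SimpleGraph.Walk.length_append, SimpleGraph.Walk.length_reverse] at h
    have h' : W1.length = q1b.length + q1a.length := h
    omega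
  have hW2len : W2.length ≤ 2*r := by
    have h := SimpleGraph.Walk.length_map (SimpleGraph.Embedding.induce (B 2)).toHom (q2b.reverse.append q2a)
    rw [SimpleGraph.Walk.length_append, SimpleGraph.Walk.length_reverse] at h
    have h' : W2.length = q2b.length + q2a.length := h
    omega
  have hW0mem : ∀ e ∈ W0.edges, ∀ w ∈ e, w ∈ B 0 := fun e he => branch_edge_mem _ he
  have hW1mem : ∀ e ∈ W1.edges, ∀ w ∈ e, w ∈ B 1 := fun e he => branch_edge_mem _ he
  have hW2mem : ∀ e ∈ W2.edges, ∀ w ∈ e, w ∈ B 2 := fun e he => branch_edge_mem _ he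
  set W : G.Walk b1 a3 := W0.append (SimpleGraph.Walk.cons h12 (W1.append
    (SimpleGraph.Walk.cons h23 W2))) with hW
  have hWlen : W.length ≤ 6*r + 2 := by
    rw [hW]
    rw [SimpleGraph.Walk.length_append, SimpleGraph.Walk.length_cons,
      SimpleGraph.Walk.length_append, SimpleGraph.Walk.length_cons]
    omega
  have hd20 : Disjoint (B 2) (B 0) := hdisj 2 0 (by decide)
  have hd21 : Disjoint (B 2) (B 1) := hdisj 2 1 (by decide)
  have hd01 : Disjoint (B 0) (B 1) := hdisj 0 1 (by decide)
  have hWe : s(a3, b1) ∉ W.edges := by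
    intro hmem
    rw [hW, SimpleGraph.Walk.edges_append, SimpleGraph.Walk.edges_cons,
      SimpleGraph.Walk.edges_append, SimpleGraph.Walk.edges_cons] at hmem
    simp only [List.mem_append, List.mem_cons] at hmem
    rcases hmem with h | (h | (h | (h | h)))
    · exact Set.disjoint_left.mp hd20 ha3 (hW0mem _ h a3 (Sym2.mem_mk_left _ _))
    · rw [Sym2.eq_iff] at h
      rcases h with ⟨h1, _⟩ | ⟨h1, h2⟩
      · exact Set.disjoint_left.mp hd20 ha3 (h1 ▸ ha1)
      · exact Set.disjoint_left.mp hd21 ha3 (h1 ▸ hb2)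
    · exact Set.disjoint_left.mp hd21 ha3 (hW1mem _ h a3 (Sym2.mem_mk_left _ _))
    · rw [Sym2.eq_iff] at h
      rcases h with ⟨h1, _⟩ | ⟨_, h2⟩
      · exact Set.disjoint_left.mp hd21 ha3 (h1 ▸ ha2)
      · exact Set.disjoint_left.mp hd01 hb1 (h2 ▸ ha2)
    · have := hW2mem _ h b1 (Sym2.mem_mk_right _ _)
      exact Set.disjoint_left.mp hd20 this hb1
  -- extract a path
  set p : G.Walk b1 a3 := W.bypass with hp
  have hpath : p.IsPath := SimpleGraph.Walk.bypass_isPath W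
  have hpe : s(a3, b1) ∉ p.edges := fun h => hWe (SimpleGraph.Walk.edges_bypass_subset W h)
  have hplen : p.length ≤ 6*r + 2 := le_trans (SimpleGraph.Walk.length_bypass_le W) hWlen
  have hne13 : b1 ≠ a3 := by
    intro h
    exact Set.disjoint_left.mp hd20 ha3 (h ▸ hb1)
  have hp2 : 2 ≤ p.length := two_le_length p hne13 hpe
  -- build the cyclic tuple
  set ℓ : ℕ := p.length + 1 with hldef
  have h3ℓ : 3 ≤ ℓ := by omega
  have hℓL : ℓ ≤ L := by omega
  set c : Fin ℓ → V := fun i => p.getVert i.val with hcdef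
  have hcinj : Injective c := by
    intro i j hij
    have := getVert_inj_of_isPath p hpath i.val j.val (by omega) (by omega) hij
    exact Fin.ext this
  apply hcyc ℓ h3ℓ hℓL c hcinj
  intro i
  rcases Nat.lt_or_ge (i.val + 1) ℓ with hi | hi
  · have hrot : (finRotate ℓ i).val = i.val + 1 := finRotate_val_succ i hi
    show G.Adj (p.getVert i.val) (p.getVert (finRotate ℓ i).val)
    rw [hrot]
    exact SimpleGraph.Walk.adj_getVert_succ p (by omega)
  · have hival : i.val + 1 = ℓ := by have := i.isLt; omega
    have hrot : (finRotate ℓ i).val = 0 := finRotate_val_last i hival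
    show G.Adj (p.getVert i.val) (p.getVert (finRotate ℓ i).val)
    rw [hrot]
    have hi2 : i.val = p.length := by omega
    rw [hi2, SimpleGraph.Walk.getVert_length, SimpleGraph.Walk.getVert_zero]
    exact h31


lemma minor_card_le {V : Type} [Fintype V] {G : SimpleGraph V} {r t : ℕ}
    (h : CompleteDepthMinor G r t) : t ≤ Fintype.card V := by
  obtain ⟨B, hne, hdisj, -, -⟩ := h
  have : Function.Injective (fun i : Fin t => (hne i).some) := by
    intro i j hij
    by_contra hij'
    simp only at hij
    exact Set.disjoint_left.mp (hdisj i j hij') (hne i).some_mem (hij ▸ (hne j).some_mem)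
  simpa using Fintype.card_le_of_injective _ this

lemma minor_three_of {V : Type} {G : SimpleGraph V} {r t : ℕ} (h3 : 3 ≤ t)
    (h : CompleteDepthMinor G r t) : CompleteDepthMinor G r 3 := by
  obtain ⟨B, hne, hdisj, hrad, hadj⟩ := h
  refine ⟨fun i => B (Fin.castLE h3 i), fun i => hne _, ?_, fun i => hrad _, ?_⟩
  · intro i j hij
    exact hdisj _ _ (fun h => hij (Fin.castLE_injective h3 h))
  · intro i j hij
    exact hadj _ _ (fun h => hij (Fin.castLE_injective h3 h))

set_option maxHeartbeats 1600000 in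
lemma exists_good_graph (j : ℕ) (hj : 1 ≤ j) :
    ∃ (m k : ℕ) (G : SimpleGraph (Fin m)), 2 ≤ m ∧ 1 ≤ k ∧ k * j ≤ m ∧
      (∀ A B : Finset (Fin m), Disjoint A B → k ≤ A.card → k ≤ B.card →
        ¬((∀ a ∈ A, ∀ b ∈ B, G.Adj a b) ∨ (∀ a ∈ A, ∀ b ∈ B, ¬ G.Adj a b))) ∧
      (∀ ℓ : ℕ, 3 ≤ ℓ → ℓ ≤ j → ∀ c : Fin ℓ → Fin m, Injective c →
        ¬ (∀ i, G.Adj (c i) (c (finRotate ℓ i)))) := by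
  classical
  obtain ⟨c0, hc0⟩ : ∃ c0, c0 = 16*j^2 := ⟨_, rfl⟩
  obtain ⟨N, hNdef⟩ : ∃ N, N = 4*(j+1)*c0^j := ⟨_, rfl⟩
  obtain ⟨n, hndef⟩ : ∃ n, n = c0*N := ⟨_, rfl⟩
  obtain ⟨k, hkdef⟩ : ∃ k, k = 8*j*N := ⟨_, rfl⟩
  have hc02 : 2 ≤ c0 := by rw [hc0]; nlinarith
  have hc0pow : 1 ≤ c0^j := Nat.one_le_pow _ _ (by omega)
  have hN2 : 8 ≤ N := by
    rw [hNdef]; nlinarith [hc0pow]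
  have hjj : 1 ≤ j^2 := by nlinarith
  have hj4 : j^2 ≤ j^4 := Nat.pow_le_pow_right hj (by norm_num)
  have hNN : N ≤ N^2 := by nlinarith
  have hN0 : 0 < N := by omega
  have hNn : n = 16*j^2*N := by rw [hndef, hc0]
  -- step1 hypotheses
  have hs1 : 2 ≤ N := by omega
  have hs2 : (1:ℕ) ≤ N := by omega
  have hsLn : j ≤ n := by rw [hndef, hc0]; nlinarith
  have hsk1 : 1 ≤ k := by rw [hkdef]; nlinarith
  have hskP : 2 * k^2 ≤ n * n := by
    rw [hkdef, hNn]
    have h := Nat.mul_le_mul hj4 (le_refl (N^2))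
    nlinarith [h]
  have hsR1 : 4 * (n.choose k)^2 * (N-1)^(k^2) ≤ N^(k^2) := by
    apply R1_arith _ _ _ hs1
    have h1 : (N-1) * (2*n+4) ≤ N * (2*n+4) := Nat.mul_le_mul (Nat.sub_le _ _) le_rfl
    have h2 : N * (2*n+4) ≤ k^2 := by
      rw [hkdef, hNn]
      have h := Nat.mul_le_mul hjj hNN
      nlinarith [h]
    omega
  have hsR2 : 4 * (n.choose k)^2 ≤ N^(k^2) := by
    have h1 : 4 * (n.choose k)^2 ≤ 4 * (2^n)^2 :=
      Nat.mul_le_mul le_rfl (Nat.pow_le_pow_left (choose_le_two_pow n k) 2)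
    have h2 : (4:ℕ) * (2^n)^2 = 2^(2*n+2) := by rw [← pow_mul]; ring
    have h3 : (2:ℕ)^(2*n+2) ≤ 2^(k^2) := by
      apply Nat.pow_le_pow_right (by norm_num)
      rw [hkdef, hNn]
      have h := Nat.mul_le_mul hjj hNN
      nlinarith [h]
    have h4 : (2:ℕ)^(k^2) ≤ N^(k^2) := Nat.pow_le_pow_left (by omega) _
    calc 4 * (n.choose k)^2 ≤ 4*(2^n)^2 := h1
      _ = 2^(2*n+2) := h2
      _ ≤ 2^(k^2) := h3
      _ ≤ N^(k^2) := h4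
  have hsR3 : ∀ ℓ, 3 ≤ ℓ → ℓ ≤ j → 4*(j+1)*n^ℓ ≤ N * N^ℓ := by
    intro ℓ h3 hℓj
    rw [hndef, mul_pow]
    have h1 : c0^ℓ ≤ c0^j := Nat.pow_le_pow_right (by omega) hℓj
    calc 4*(j+1)*(c0^ℓ * N^ℓ) = (4*(j+1)*c0^ℓ) * N^ℓ := by ring
      _ ≤ (4*(j+1)*c0^j) * N^ℓ := by
          exact Nat.mul_le_mul (Nat.mul_le_mul le_rfl h1) le_rfl
      _ = N * N^ℓ := by rw [hNdef]
  obtain ⟨G0, Z, hZcard, hpp, hcycZ⟩ := step1 n N k j N hs1 (by omega) hsLn hsk1 hskP hsR1 hsR2 hsR3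
  -- delete the bad vertices
  set kept : Finset (Fin n) := Zᶜ with hkept
  set m : ℕ := kept.card with hm
  have hmn : m = n - Z.card := by rw [hm, hkept, Finset.card_compl, Fintype.card_fin]
  have hZn : Z.card ≤ j * N := hZcard
  have hm2 : 2 ≤ m ∧ k * j ≤ m := by
    rw [hmn]
    have h1 : j*N + (k*j + 2) ≤ n := by
      rw [hkdef, hNn]
      have h := Nat.mul_le_mul hjj (le_refl N)
      nlinarith [h]
    omega
  set e : ↥kept ≃ Fin m := kept.equivFin with he
  set φ : Fin m → Fin n := fun a => (e.symm a).val with hφ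
  have hφinj : Injective φ := by
    intro a b hab
    exact e.symm.injective (Subtype.val_injective hab)
  have hφmem : ∀ a, φ a ∈ kept := fun a => (e.symm a).2
  refine ⟨m, k, G0.comap φ, hm2.1, hsk1, hm2.2, ?_, ?_⟩
  · -- no pure pairs
    intro A B hAB hA hB hbad
    obtain ⟨A', hA'sub, hA'⟩ := Finset.exists_subset_card_eq hA
    obtain ⟨B', hB'sub, hB'⟩ := Finset.exists_subset_card_eq hB
    have hd' : Disjoint A' B' :=
      Finset.disjoint_of_subset_left hA'sub (Finset.disjoint_of_subset_right hB'sub hAB)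
    have hdim : Disjoint (A'.image φ) (B'.image φ) := by
      rw [Finset.disjoint_image hφinj]; exact hd'
    have hcA : (A'.image φ).card = k := by rw [Finset.card_image_of_injective _ hφinj, hA']
    have hcB : (B'.image φ).card = k := by rw [Finset.card_image_of_injective _ hφinj, hB']
    obtain ⟨⟨a, ha, b, hb, hadj⟩, ⟨a', ha', b', hb', hnadj⟩⟩ := hpp _ _ hdim hcA hcB
    rcases hbad with hcom | hanti
    · simp only [Finset.mem_image] at ha' hb'
      obtain ⟨a0, ha0, rfl⟩ := ha'
      obtain ⟨b0, hb0, rfl⟩ := hb'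
      exact hnadj (hcom a0 (hA'sub ha0) b0 (hB'sub hb0))
    · simp only [Finset.mem_image] at ha hb
      obtain ⟨a0, ha0, rfl⟩ := ha
      obtain ⟨b0, hb0, rfl⟩ := hb
      exact hanti a0 (hA'sub ha0) b0 (hB'sub hb0) hadj
  · -- no short cycles
    intro ℓ h3 hℓj c hc hadj
    obtain ⟨i, hiZ⟩ := hcycZ ℓ h3 hℓj (φ ∘ c) (hφinj.comp hc) (fun i => hadj i)
    have := hφmem (c i)
    rw [hkept, Finset.mem_compl] at this
    exact this hiZ

theorem exists_nowhere_dense_without_strong_EH :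
    ∃ 𝒞 : GraphClass, NowhereDense 𝒞 ∧
      ∀ δ : ℝ, 0 < δ → ∃ (n : ℕ) (G : SimpleGraph (Fin n)), G ∈ 𝒞 n ∧ 2 ≤ n ∧
        ¬ ∃ A B : Finset (Fin n), Disjoint A B ∧
            δ * (n : ℝ) ≤ (A.card : ℝ) ∧ δ * (n : ℝ) ≤ (B.card : ℝ) ∧
            ((∀ a ∈ A, ∀ b ∈ B, G.Adj a b) ∨ (∀ a ∈ A, ∀ b ∈ B, ¬ G.Adj a b)) := by
  classical
  have hex : ∀ j : ℕ, ∃ (m k : ℕ) (G : SimpleGraph (Fin m)), 2 ≤ m ∧ 1 ≤ k ∧ k * (j+1) ≤ m ∧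
      (∀ A B : Finset (Fin m), Disjoint A B → k ≤ A.card → k ≤ B.card →
        ¬((∀ a ∈ A, ∀ b ∈ B, G.Adj a b) ∨ (∀ a ∈ A, ∀ b ∈ B, ¬ G.Adj a b))) ∧
      (∀ ℓ : ℕ, 3 ≤ ℓ → ℓ ≤ j+1 → ∀ c : Fin ℓ → Fin m, Injective c →
        ¬ (∀ i, G.Adj (c i) (c (finRotate ℓ i)))) :=
    fun j => exists_good_graph (j+1) (by omega)
  set mm : ℕ → ℕ := fun j => (hex j).choose with hmm
  set kk : ℕ → ℕ := fun j => (hex j).choose_spec.choose with hkk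
  set GG : ∀ j : ℕ, SimpleGraph (Fin (mm j)) :=
    fun j => (hex j).choose_spec.choose_spec.choose with hGG
  have props : ∀ j : ℕ, 2 ≤ mm j ∧ 1 ≤ kk j ∧ kk j * (j+1) ≤ mm j ∧
      (∀ A B : Finset (Fin (mm j)), Disjoint A B → kk j ≤ A.card → kk j ≤ B.card →
        ¬((∀ a ∈ A, ∀ b ∈ B, (GG j).Adj a b) ∨ (∀ a ∈ A, ∀ b ∈ B, ¬ (GG j).Adj a b))) ∧
      (∀ ℓ : ℕ, 3 ≤ ℓ → ℓ ≤ j+1 → ∀ c : Fin ℓ → Fin (mm j), Injective c →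
        ¬ (∀ i, (GG j).Adj (c i) (c (finRotate ℓ i)))) :=
    fun j => (hex j).choose_spec.choose_spec.choose_spec
  refine ⟨fun n => {G | ∃ j : ℕ, ∃ h : mm j = n, h ▸ GG j = G}, ?_, ?_⟩
  · -- nowhere dense
    intro r
    refine ⟨max 3 (((Finset.range (6*r+3)).sup mm) + 1), ?_⟩
    intro n G hG hminor
    obtain ⟨j, h, hGeq⟩ := hG
    subst h
    subst hGeq
    rcases le_or_gt (6*r+3) (j+1) with hcase | hcase
    · -- large girth: no K3 minor
      have h3 : CompleteDepthMinor (GG j) r 3 :=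
        minor_three_of (le_max_left _ _) hminor
      exact no_K3_of_cycfree (GG j) (j+1) r hcase
        (fun ℓ h3' hL c hc => (props j).2.2.2.2 ℓ h3' hL c hc) h3
    · -- small index: graph too small
      have hle : mm j ≤ (Finset.range (6*r+3)).sup mm :=
        Finset.le_sup (Finset.mem_range.mpr (by omega))
      have := minor_card_le hminor
      rw [Fintype.card_fin] at this
      have ht : (Finset.range (6*r+3)).sup mm + 1 ≤ max 3 (((Finset.range (6*r+3)).sup mm) + 1) :=
        le_max_right _ _
      omega
  · -- no strong EH
    intro δ hδ
    set j : ℕ := ⌈1/δ⌉₊ with hj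
    refine ⟨mm j, GG j, ⟨j, rfl, rfl⟩, (props j).1, ?_⟩
    rintro ⟨A, B, hAB, hA, hB, hor⟩
    obtain ⟨hm2, hk1, hkm, hppf, -⟩ := props j
    -- (kk j : ℝ) ≤ δ * mm j
    have hδj : (1:ℝ) ≤ δ * (j+1) := by
      have h1 : (1/δ) ≤ (j:ℝ) := le_trans (Nat.le_ceil _) (by exact_mod_cast le_refl _)
      have h2 : (1/δ) ≤ (j:ℝ)+1 := by linarith
      calc (1:ℝ) = δ * (1/δ) := by field_simp
        _ ≤ δ * ((j:ℝ)+1) := by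
            apply mul_le_mul_of_nonneg_left h2 (le_of_lt hδ)
      
    have hkR : (kk j : ℝ) ≤ δ * (mm j : ℝ) := by
      have h1 : (kk j : ℝ) * ((j:ℝ)+1) ≤ (mm j : ℝ) := by exact_mod_cast hkm
      have h2 : (kk j : ℝ) ≥ 0 := by positivity
      calc (kk j : ℝ) = (kk j : ℝ) * 1 := by ring
        _ ≤ (kk j : ℝ) * (δ * ((j:ℝ)+1)) := by
            apply mul_le_mul_of_nonneg_left hδj h2
        _ = δ * ((kk j : ℝ) * ((j:ℝ)+1)) := by ring
        _ ≤ δ * (mm j : ℝ) := by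
            apply mul_le_mul_of_nonneg_left h1 (le_of_lt hδ)
    have hAk : kk j ≤ A.card := by
      have : (kk j : ℝ) ≤ (A.card : ℝ) := le_trans hkR (le_trans hA le_rfl)
      exact_mod_cast this
    have hBk : kk j ≤ B.card := by
      have : (kk j : ℝ) ≤ (B.card : ℝ) := le_trans hkR (le_trans hB le_rfl)
      exact_mod_cast this
    exact hppf A B hAB hAk hBk hor

end Aux
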